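/- Let R be a right po-coherent po-ring and let m ≥ 1. Then the matrix ring M_m(R) of m × m matrices over R, ordered componentwise, is a right po-coherent po-ring. -/

import Mathlib

/-- A *po-ring*: a ring equipped with a partial order such that addition is
translation-invariant, multiplication by nonnegative elements (on either side) is monotone,
the ring is directed (every element is a difference of two nonnegative elements),
and `0 ≤ 1`. -/
class PORing (R : Type*) extends Ring R, PartialOrder R where
  add_le_add_right' : ∀ a b : R, a ≤ b → ∀ c : R, a + c ≤ b + c
  mul_le_mul_of_nonneg_right' : ∀ a b c : R, a ≤ b → 0 ≤ c → a * c ≤ b * c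
  mul_le_mul_of_nonneg_left' : ∀ a b c : R, a ≤ b → 0 ≤ c → c * a ≤ c * b
  directed' : ∀ x : R, ∃ y z : R, 0 ≤ y ∧ 0 ≤ z ∧ x = y - z
  zero_le_one' : (0 : R) ≤ 1

/-- A *partially ordered right module* over a po-ring `R`: an additive abelian group with a
right `R`-action `rsmul` (written on the right, so `rsmul a ξ` is `aξ`), with the usual
right-module axioms, such that addition is translation-invariant and
`0 ≤ a`, `0 ≤ ξ` imply `0 ≤ aξ`. -/
class PORightModule (R : Type*) [PORing R] (A : Type*) [AddCommGroup A] [PartialOrder A] where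
  rsmul : A → R → A
  add_rsmul : ∀ (a b : A) (r : R), rsmul (a + b) r = rsmul a r + rsmul b r
  rsmul_add : ∀ (a : A) (r s : R), rsmul a (r + s) = rsmul a r + rsmul a s
  rsmul_mul : ∀ (a : A) (r s : R), rsmul a (r * s) = rsmul (rsmul a r) s
  rsmul_one : ∀ a : A, rsmul a 1 = a
  add_le_add_right' : ∀ a b : A, a ≤ b → ∀ c : A, a + c ≤ b + c
  rsmul_nonneg : ∀ (a : A) (r : R), 0 ≤ a → 0 ≤ r → 0 ≤ rsmul a r

open PORightModule

/-- A po-ring is a partially ordered right module over itself. -/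
instance PORing.toPORightModule (R : Type*) [PORing R] : PORightModule R R where
  rsmul := (· * ·)
  add_rsmul := add_mul
  rsmul_add := mul_add
  rsmul_mul a r s := (mul_assoc a r s).symm
  rsmul_one := mul_one
  add_le_add_right' := PORing.add_le_add_right'
  rsmul_nonneg a r ha hr := by
    have h := PORing.mul_le_mul_of_nonneg_right' 0 a r ha hr
    simpa using h

/-- Products of partially ordered right modules, ordered coordinatewise. -/
instance Pi.instPORightModule {R : Type*} [PORing R] {ι : Type*} {A : ι → Type*}
    [∀ i, AddCommGroup (A i)] [∀ i, PartialOrder (A i)] [∀ i, PORightModule R (A i)] :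
    PORightModule R (∀ i, A i) where
  rsmul x r i := rsmul (x i) r
  add_rsmul a b r := funext fun i => add_rsmul (a i) (b i) r
  rsmul_add a r s := funext fun i => rsmul_add (a i) r s
  rsmul_mul a r s := funext fun i => rsmul_mul (a i) r s
  rsmul_one a := funext fun i => rsmul_one (a i)
  add_le_add_right' a b h c := by
    intro i
    exact PORightModule.add_le_add_right' R (a i) (b i) (h i) (c i)
  rsmul_nonneg a r ha hr := by
    intro i
    exact PORightModule.rsmul_nonneg (a i) r (ha i) hr

/-- Binary products of partially ordered right modules, ordered coordinatewise. -/
instance Prod.instPORightModule {R : Type*} [PORing R] {A B : Type*}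
    [AddCommGroup A] [PartialOrder A] [PORightModule R A]
    [AddCommGroup B] [PartialOrder B] [PORightModule R B] :
    PORightModule R (A × B) where
  rsmul x r := (rsmul x.1 r, rsmul x.2 r)
  add_rsmul a b r := by
    refine Prod.ext ?_ ?_ <;> simp [PORightModule.add_rsmul]
  rsmul_add a r s := by
    refine Prod.ext ?_ ?_ <;> simp [PORightModule.rsmul_add]
  rsmul_mul a r s := by
    refine Prod.ext ?_ ?_ <;> simp [PORightModule.rsmul_mul]
  rsmul_one a := by
    refine Prod.ext ?_ ?_ <;> simp [PORightModule.rsmul_one]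
  add_le_add_right' a b h c := by
    rw [Prod.le_def] at h ⊢
    constructor
    · simpa using PORightModule.add_le_add_right' R a.1 b.1 h.1 c.1
    · simpa using PORightModule.add_le_add_right' R a.2 b.2 h.2 c.2
  rsmul_nonneg a r ha hr := by
    rw [Prod.le_def] at ha ⊢
    constructor
    · simpa using PORightModule.rsmul_nonneg a.1 r (by simpa using ha.1) hr
    · simpa using PORightModule.rsmul_nonneg a.2 r (by simpa using ha.2) hr

section Defs

variable (R : Type*) [PORing R]

/-- The product `UX = a₁ξ₁ + ⋯ + aₙξₙ` of a row matrix `U = (a₁,…,aₙ)` with entries in `A`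
and a column matrix `X = (ξ₁,…,ξₙ)ᵗ` with entries in `R`. -/
def rowMul {A : Type*} [AddCommGroup A] [PartialOrder A] [PORightModule R A]
    {n : ℕ} (U : Fin n → A) (X : Fin n → R) : A :=
  ∑ i, rsmul (U i) (X i)

/-- A subset `S` of a partially ordered right `R`-module is a *finitely generated
`R⁺`-subsemimodule* if it is the set of all `R⁺`-linear combinations of some finite subset. -/
def IsFGConeIn {A : Type*} [AddCommGroup A] [PartialOrder A] [PORightModule R A]
    (S : Set A) : Prop :=
  ∃ (k : ℕ) (g : Fin k → A),
    S = { a | ∃ Y : Fin k → R, (∀ i, 0 ≤ Y i) ∧ a = rowMul R g Y }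

/-- `A` is *finitely related at* the row matrix `U ∈ M_{1,n}(A)` if the solution set of the
mixed system `UX ≥ 0, X ≥ 0` is a finitely generated `R⁺`-subsemimodule of `M_{n,1}(R)`. -/
def FinitelyRelatedAt {A : Type*} [AddCommGroup A] [PartialOrder A] [PORightModule R A]
    {n : ℕ} (U : Fin n → A) : Prop :=
  IsFGConeIn R {X : Fin n → R | 0 ≤ rowMul R U X ∧ ∀ i, 0 ≤ X i}

/-- `A` is *finitely po-presented at* the row matrix `U ∈ M_{1,n}(A)` if the solution set of
the system `UX ≥ 0` is a finitely generated `R⁺`-subsemimodule of `M_{n,1}(R)`. -/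
def FinitelyPoPresentedAt {A : Type*} [AddCommGroup A] [PartialOrder A] [PORightModule R A]
    {n : ℕ} (U : Fin n → A) : Prop :=
  IsFGConeIn R {X : Fin n → R | 0 ≤ rowMul R U X}

/-- A row matrix `U` is *spanning* if its entries generate `A` as a right `R`-module, i.e.
every element of `A` is an `R`-linear combination `UX` of the entries. -/
def SpanningRow {A : Type*} [AddCommGroup A] [PartialOrder A] [PORightModule R A]
    {n : ℕ} (U : Fin n → A) : Prop :=
  ∀ a : A, ∃ X : Fin n → R, a = rowMul R U X

variable (A : Type*) [AddCommGroup A] [PartialOrder A] [PORightModule R A]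

/-- `A` is *finitely po-presented* if it is finitely po-presented at some spanning row
matrix. -/
def FinitelyPoPresented : Prop :=
  ∃ (n : ℕ) (U : Fin n → A), SpanningRow R U ∧ FinitelyPoPresentedAt R U

/-- `A` is *finitely related* if it is a finitely generated right `R`-module and is finitely
related at every spanning row matrix. -/
def FinitelyRelatedMod : Prop :=
  (∃ (n : ℕ) (U : Fin n → A), SpanningRow R U) ∧
    ∀ (n : ℕ) (U : Fin n → A), SpanningRow R U → FinitelyRelatedAt R U

/-- `A` is *po-coherent* if it is finitely related at every row matrix of elements of `A`. -/
def PoCoherent : Prop :=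
  ∀ (n : ℕ) (U : Fin n → A), FinitelyRelatedAt R U

end Defs

/-- A po-ring is *right po-coherent* if it is po-coherent as a partially ordered right module
over itself. -/
def RightPoCoherent (R : Type*) [PORing R] : Prop :=
  PoCoherent R R

/-- Sums over finite sets are monotone in a po-ring. -/
theorem PORing.sum_le_sum {R : Type*} [PORing R] {ι : Type*} {s : Finset ι} {f g : ι → R}
    (h : ∀ i ∈ s, f i ≤ g i) : ∑ i ∈ s, f i ≤ ∑ i ∈ s, g i := by
  classical
  induction s using Finset.induction_on with
  | empty => simp
  | @insert a s ha ih =>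
    rw [Finset.sum_insert ha, Finset.sum_insert ha]
    have h1 : f a + ∑ i ∈ s, f i ≤ g a + ∑ i ∈ s, f i :=
      PORing.add_le_add_right' _ _ (h a (Finset.mem_insert_self a s)) _
    have h2 : g a + ∑ i ∈ s, f i ≤ g a + ∑ i ∈ s, g i := by
      rw [add_comm (g a), add_comm (g a)]
      exact PORing.add_le_add_right' _ _ (ih fun i hi => h i (Finset.mem_insert_of_mem hi)) _
    exact le_trans h1 h2

/-- The componentwise (entrywise) partial order on square matrices over a po-ring. -/
instance Matrix.instPartialOrderOfPORing {R : Type*} [PORing R] {m : ℕ} :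
    PartialOrder (Matrix (Fin m) (Fin m) R) :=
  inferInstanceAs (PartialOrder (Fin m → Fin m → R))

/-- The matrix ring `M_m(R)` over a po-ring, ordered componentwise, is a po-ring. -/
instance Matrix.instPORing {R : Type*} [PORing R] {m : ℕ} :
    PORing (Matrix (Fin m) (Fin m) R) where
  __ := (inferInstance : Ring (Matrix (Fin m) (Fin m) R))
  __ := (inferInstance : PartialOrder (Matrix (Fin m) (Fin m) R))
  add_le_add_right' A B h C := by
    intro i j
    simpa [Matrix.add_apply] using PORing.add_le_add_right' (A i j) (B i j) (h i j) (C i j)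
  mul_le_mul_of_nonneg_right' A B C h hC := by
    intro i j
    rw [Matrix.mul_apply, Matrix.mul_apply]
    refine PORing.sum_le_sum fun k _ => ?_
    exact PORing.mul_le_mul_of_nonneg_right' (A i k) (B i k) (C k j) (h i k)
      (by simpa using hC k j)
  mul_le_mul_of_nonneg_left' A B C h hC := by
    intro i j
    rw [Matrix.mul_apply, Matrix.mul_apply]
    refine PORing.sum_le_sum fun k _ => ?_
    exact PORing.mul_le_mul_of_nonneg_left' (A k j) (B k j) (C i k) (h k j)
      (by simpa using hC i k)
  directed' X := by
    choose y z hy hz hxy using fun p : Fin m × Fin m => PORing.directed' (X p.1 p.2)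
    refine ⟨Matrix.of fun i j => y (i, j), Matrix.of fun i j => z (i, j), ?_, ?_, ?_⟩
    · intro i j
      simpa using hy (i, j)
    · intro i j
      simpa using hz (i, j)
    · ext i j
      simpa [Matrix.sub_apply] using hxy (i, j)
  zero_le_one' := by
    intro i j
    simp only [Matrix.zero_apply, Matrix.one_apply]
    split_ifs
    · exact PORing.zero_le_one'
    · exact le_refl 0

section AuxLemmas

variable {R : Type*} [PORing R]

@[simp] lemma rsmul_eq_mul (a r : R) : rsmul a r = a * r := rfl

lemma rowMul_R_def {n : ℕ} (a X : Fin n → R) : rowMul R a X = ∑ j, a j * X j := rfl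

lemma rowMul_pi_apply {n k : ℕ} (g : Fin k → Fin n → R) (Y : Fin k → R) (j : Fin n) :
    rowMul R g Y j = ∑ t, g t j * Y t := by
  simp only [rowMul, Finset.sum_apply]
  rfl

lemma rowMul_comp {n k : ℕ} (a : Fin n → R) (g : Fin k → Fin n → R) (Y : Fin k → R) :
    rowMul R a (rowMul R g Y) = rowMul R (fun t => rowMul R a (g t)) Y := by
  simp only [rowMul_R_def, rowMul_pi_apply, Finset.mul_sum, Finset.sum_mul, mul_assoc]
  rw [Finset.sum_comm]

lemma rowMul_pi_comp {n k l : ℕ} (g : Fin k → Fin n → R) (h : Fin l → Fin k → R)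
    (Z : Fin l → R) :
    rowMul R g (rowMul R h Z) = rowMul R (fun s => rowMul R g (h s)) Z := by
  funext j
  simp only [rowMul_pi_apply, Finset.mul_sum, Finset.sum_mul, mul_assoc]
  rw [Finset.sum_comm]

lemma PORing.sum_nonneg {ι : Type*} {s : Finset ι} {f : ι → R}
    (h : ∀ i ∈ s, 0 ≤ f i) : 0 ≤ ∑ i ∈ s, f i := by
  simpa using PORing.sum_le_sum (f := fun _ => (0 : R)) (g := f) (s := s) h

/-- Solution sets of finite systems of homogeneous inequalities over a right po-coherent
po-ring are finitely generated cones. -/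
theorem fg_system (hR : RightPoCoherent R) (p : ℕ) :
    ∀ (n : ℕ) (A : Fin p → Fin n → R),
      IsFGConeIn R {X : Fin n → R | (∀ r, 0 ≤ rowMul R (A r) X) ∧ ∀ i, 0 ≤ X i} := by
  induction p with
  | zero =>
    intro n A
    refine ⟨n, fun i j => if i = j then (1 : R) else 0, ?_⟩
    ext X
    simp only [Set.mem_setOf_eq]
    constructor
    · rintro ⟨-, hX⟩
      refine ⟨X, hX, ?_⟩
      funext j
      rw [rowMul_pi_apply]
      simp
    · rintro ⟨Y, hY, rfl⟩
      refine ⟨fun r => r.elim0, fun j => ?_⟩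
      have : rowMul R (fun i j => if i = j then (1 : R) else 0) Y j = Y j := by
        rw [rowMul_pi_apply]; simp
      rw [this]
      exact hY j
  | succ p ih =>
    intro n A
    obtain ⟨k, g, hg⟩ := ih n (fun r => A r.castSucc)
    set b : Fin k → R := fun t => rowMul R (A (Fin.last p)) (g t) with hb
    obtain ⟨l, h, hh⟩ := hR k b
    refine ⟨l, fun s => rowMul R g (h s), ?_⟩
    ext X
    simp only [Set.mem_setOf_eq]
    constructor
    · rintro ⟨hrows, hX⟩
      have hX1 : X ∈ {X : Fin n → R |
          (∀ r : Fin p, 0 ≤ rowMul R (A r.castSucc) X) ∧ ∀ i, 0 ≤ X i} :=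
        ⟨fun r => hrows r.castSucc, hX⟩
      rw [hg] at hX1
      obtain ⟨Y, hY, rfl⟩ := hX1
      have hbY : 0 ≤ rowMul R b Y := by
        rw [hb, ← rowMul_comp]
        exact hrows (Fin.last p)
      have hYmem : Y ∈ {Y : Fin k → R | 0 ≤ rowMul R b Y ∧ ∀ i, 0 ≤ Y i} := ⟨hbY, hY⟩
      rw [hh] at hYmem
      obtain ⟨Z, hZ, rfl⟩ := hYmem
      exact ⟨Z, hZ, rowMul_pi_comp g h Z⟩
    · rintro ⟨Z, hZ, rfl⟩
      set Y := rowMul R h Z with hYdef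
      have hYmem : Y ∈ {Y : Fin k → R | 0 ≤ rowMul R b Y ∧ ∀ i, 0 ≤ Y i} := by
        rw [hh]; exact ⟨Z, hZ, rfl⟩
      rw [← rowMul_pi_comp g h Z]
      have hXmem : rowMul R g Y ∈ {X : Fin n → R |
          (∀ r : Fin p, 0 ≤ rowMul R (A r.castSucc) X) ∧ ∀ i, 0 ≤ X i} := by
        rw [hg]; exact ⟨Y, hYmem.2, rfl⟩
      refine ⟨fun r => ?_, hXmem.2⟩
      induction r using Fin.lastCases with
      | last => rw [rowMul_comp]; exact hYmem.1
      | cast r' => exact hXmem.1 r'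

end AuxLemmas

/-- Let `R` be a right po-coherent po-ring and `m ≥ 1`.  Then the matrix
ring `M_m(R)`, ordered componentwise, is a right po-coherent po-ring. -/
theorem rightPoCoherent_matrixRing (R : Type*) [PORing R] (m : ℕ) (hm : 1 ≤ m)
    (hR : RightPoCoherent R) :
    RightPoCoherent (Matrix (Fin m) (Fin m) R) := by
  classical
  intro n U
  let M := Matrix (Fin m) (Fin m) R
  let e : Fin n × Fin m ≃ Fin (n * m) := finProdFinEquiv
  set A : Fin m → Fin (n * m) → R := fun p j => U (e.symm j).1 p (e.symm j).2 with hA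
  obtain ⟨k, g, hg⟩ := fg_system hR m (n * m) A
  -- helper : entries of a matrix rowMul
  have hrowM : ∀ (K : ℕ) (G : Fin K → Fin n → M) (Y : Fin K → M) (i : Fin n) (r c : Fin m),
      rowMul M G Y i r c = ∑ t, ∑ u, G t i r u * Y t u c := by
    intro K G Y i r c
    have h1 : rowMul M G Y i = ∑ t, G t i * Y t := by
      simp only [rowMul, Finset.sum_apply]; rfl
    rw [h1, Matrix.sum_apply]
    exact Finset.sum_congr rfl fun t _ => Matrix.mul_apply
  have hU : ∀ (X : Fin n → M) (p q : Fin m),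
      rowMul M U X p q = ∑ i, ∑ kk, U i p kk * X i kk q := by
    intro X p q
    have h1 : rowMul M U X = ∑ i, U i * X i := rfl
    rw [h1, Matrix.sum_apply]
    exact Finset.sum_congr rfl fun i _ => Matrix.mul_apply
  have htrans : ∀ (X : Fin n → M) (q p : Fin m),
      rowMul R (A p) (fun j => X (e.symm j).1 (e.symm j).2 q) = rowMul M U X p q := by
    intro X q p
    rw [rowMul_R_def, hU,
      ← Equiv.sum_comp e (fun j => A p j * X (e.symm j).1 (e.symm j).2 q)]
    simp only [hA, Equiv.symm_apply_apply]
    rw [Fintype.sum_prod_type]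
  set G : Fin k → Fin n → M := fun t i => Matrix.of fun row col => g t (e (i, row)) with hG
  refine ⟨k, G, ?_⟩
  ext X
  simp only [Set.mem_setOf_eq]
  constructor
  · rintro ⟨hpos, hX⟩
    have hpos' : ∀ p q : Fin m, (0 : R) ≤ rowMul M U X p q := fun p q => hpos p q
    have key : ∀ q : Fin m, ∃ Yc : Fin k → R, (∀ t, 0 ≤ Yc t) ∧
        (fun j => X (e.symm j).1 (e.symm j).2 q) = rowMul R g Yc := by
      intro q
      have hmem : (fun j => X (e.symm j).1 (e.symm j).2 q) ∈
          {ξ : Fin (n * m) → R | (∀ p, 0 ≤ rowMul R (A p) ξ) ∧ ∀ j, 0 ≤ ξ j} := by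
        refine ⟨fun p => ?_, fun j => ?_⟩
        · rw [htrans]; exact hpos' p q
        · exact hX (e.symm j).1 (e.symm j).2 q
      rw [hg] at hmem
      exact hmem
    choose Yc hYc hXc using key
    refine ⟨fun t => Matrix.of fun u col => if u = ⟨0, hm⟩ then Yc col t else 0,
      fun t u col => ?_, ?_⟩
    · simp only [Matrix.of_apply]
      split_ifs with hcase
      · exact hYc col t
      · exact le_refl 0
    · funext i
      funext r c
      rw [hrowM]
      simp only [hG, Matrix.of_apply, mul_ite, mul_zero, Finset.sum_ite_eq', Finset.mem_univ,
        if_true]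
      have h2 := congrFun (hXc c) (e (i, r))
      simp only [Equiv.symm_apply_apply] at h2
      rw [h2, rowMul_pi_apply]
  · rintro ⟨Y, hY, rfl⟩
    have hxi : ∀ q : Fin m,
        (fun j => (rowMul M G Y) (e.symm j).1 (e.symm j).2 q) ∈
        {ξ : Fin (n * m) → R | (∀ p, 0 ≤ rowMul R (A p) ξ) ∧ ∀ j, 0 ≤ ξ j} := by
      intro q
      rw [hg]
      refine ⟨fun t => ∑ u, Y t u q, fun t => PORing.sum_nonneg (fun u _ => hY t u q), ?_⟩
      funext j
      rw [hrowM, rowMul_pi_apply]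
      simp only [hG, Matrix.of_apply, Prod.mk.eta, Equiv.apply_symm_apply, Finset.mul_sum]
    refine ⟨fun p q => ?_, fun i r c => ?_⟩
    · have h3 := (hxi q).1 p
      rw [htrans] at h3
      exact h3
    · have h3 := (hxi c).2 (e (i, r))
      simp only [Equiv.symm_apply_apply] at h3
      exact h3
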